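/- Let Δ_K denote the discriminant of the imaginary quadratic subfield K of F. (i) If O_F contains an element x with N(x) = 2 or N(x) = 3, then |Δ_K| ≤ 12. (ii) If Δ_K ∈ {−3, −11} then O_F contains no element x with N(x) = 2 (hence 𝔅₂(s) = ∅ for all s > 0), and if Δ_K ∈ {−4, −7} then O_F contains no element x with N(x) = 3 (hence 𝔅₃(s) = ∅ for all s > 0). -/

import Mathlib

open NumberField nonZeroDivisors MeasureTheory

noncomputable section

/-- `‖ux‖² = 2u₁²|σ(x)|² + 2u₂²|σ'(x)|²` for `u = (u₁, u₂)`. -/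
def normSq2 {F : Type*} [Field F] (σ σ' : F →+* ℂ) (u₁ u₂ : ℝ) (x : F) : ℝ :=
  2 * u₁ ^ 2 * ‖σ x‖ ^ 2 + 2 * u₂ ^ 2 * ‖σ' x‖ ^ 2

/-- `N(x) = |σ(x)|²·|σ'(x)|²`, the absolute value of the norm of `x`. -/
def absN {F : Type*} [Field F] (σ σ' : F →+* ℂ) (x : F) : ℝ :=
  ‖σ x‖ ^ 2 * ‖σ' x‖ ^ 2

/-- `ε` is a fundamental unit: every unit is `ζ · εᵏ` with `ζ` a root of unity. -/
def IsFundamentalUnit {F : Type*} [Field F] [NumberField F] (ε : (𝓞 F)ˣ) : Prop :=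
  ∀ u : (𝓞 F)ˣ, ∃ (ζ : (𝓞 F)ˣ) (k : ℤ), (∃ n : ℕ, 0 < n ∧ ζ ^ n = 1) ∧ u = ζ * ε ^ k

/-- `𝔅_j(s) = {x ∈ O_F : N(x) = j and ‖ux‖² < 8}` with `u = (s, 1/s)`. -/
def frakB {F : Type*} [Field F] [NumberField F] (σ σ' : F →+* ℂ) (j : ℕ) (s : ℝ) : Set (𝓞 F) :=
  {x | absN σ σ' (x : F) = j ∧ normSq2 σ σ' s (1 / s) (x : F) < 8}

section helpers

variable {F K : Type*} [Field F] [NumberField F] [Field K] [NumberField K]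

/-- Step A: `absN` is the absolute value of the rational norm. -/
lemma absN_eq_abs_norm (hquartic : Module.finrank ℚ F = 4)
    [Algebra K F] [IsScalarTower ℚ K F]
    (hKim : ∀ φ : K →+* ℂ, ∃ x, (φ x).im ≠ 0)
    (σ σ' : F →+* ℂ) (hplaces : InfinitePlace.mk σ ≠ InfinitePlace.mk σ') (x : F) :
    absN σ σ' x = |(Algebra.norm ℚ x : ℚ)| := by
  classical
  have hnotreal : ∀ φ : F →+* ℂ, ¬ NumberField.ComplexEmbedding.IsReal φ := by
    intro φ hφ
    obtain ⟨y, hy⟩ := hKim (φ.comp (algebraMap K F))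
    have h1 : (starRingEnd ℂ) (φ (algebraMap K F y)) = φ (algebraMap K F y) :=
      RingHom.congr_fun hφ (algebraMap K F y)
    rw [Complex.conj_eq_iff_im] at h1
    exact hy h1
  have hcomplex : ∀ w : InfinitePlace F, w.IsComplex := fun w =>
    InfinitePlace.isComplex_iff.mpr (hnotreal _)
  have hreal0 : NumberField.InfinitePlace.nrRealPlaces F = 0 := by
    rw [NumberField.InfinitePlace.nrRealPlaces, Fintype.card_eq_zero_iff]
    exact ⟨fun ⟨w, hw⟩ => (InfinitePlace.not_isReal_iff_isComplex.mpr (hcomplex w)) hw⟩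
  have hcnt := NumberField.InfinitePlace.card_add_two_mul_card_eq_rank F
  rw [hreal0, hquartic] at hcnt
  have hc2 : NumberField.InfinitePlace.nrComplexPlaces F = 2 := by omega
  have hcard : Fintype.card (InfinitePlace F) = 2 := by
    rw [← hc2, NumberField.InfinitePlace.nrComplexPlaces]
    exact (Fintype.card_congr (Equiv.subtypeUnivEquiv hcomplex)).symm
  have huniv : ({InfinitePlace.mk σ, InfinitePlace.mk σ'} : Finset (InfinitePlace F)) =
      Finset.univ :=
    Finset.eq_univ_of_card _ (by rw [Finset.card_pair hplaces, hcard])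
  have hmult : ∀ w : InfinitePlace F, w.mult = 2 := by
    intro w
    rw [InfinitePlace.mult, if_neg (InfinitePlace.not_isReal_iff_isComplex.mpr (hcomplex w))]
  have hprod := NumberField.InfinitePlace.prod_eq_abs_norm (K := F) x
  rw [← huniv, Finset.prod_pair hplaces, hmult, hmult] at hprod
  rw [absN, ← InfinitePlace.apply σ x, ← InfinitePlace.apply σ' x]
  exact hprod

/-- Step C+D: quadratic data for an integral element of the imaginary quadratic field. -/
lemma quadratic_data (hK2 : Module.finrank ℚ K = 2)
    (hKim : ∀ φ : K →+* ℂ, ∃ x, (φ x).im ≠ 0)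
    {β : K} (hβ : IsIntegral ℤ β) :
    ∃ t n f : ℤ, algebraMap ℤ ℚ n = Algebra.norm ℚ β ∧ 0 ≤ n ∧ t ^ 2 ≤ 4 * n ∧
      t ^ 2 - 4 * n = f ^ 2 * NumberField.discr K := by
  classical
  -- trace and norm are integers
  obtain ⟨t, ht⟩ := IsIntegrallyClosed.isIntegral_iff.mp (Algebra.isIntegral_trace (L := ℚ) hβ)
  obtain ⟨n, hn⟩ := IsIntegrallyClosed.isIntegral_iff.mp (Algebra.isIntegral_norm ℚ hβ)
  -- embeddings
  have hcard : Fintype.card (K →ₐ[ℚ] ℂ) = 2 := by rw [AlgHom.card]; exact hK2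
  obtain ⟨a⟩ : Nonempty (K →ₐ[ℚ] ℂ) := Fintype.card_pos_iff.mp (by rw [hcard]; norm_num)
  let a' : K →ₐ[ℚ] ℂ := RingHom.equivRatAlgHom K ℂ ((starRingEnd ℂ).comp a.toRingHom)
  have ha' : ∀ z : K, a' z = (starRingEnd ℂ) (a z) := fun z => rfl
  have hne : a' ≠ a := by
    intro h
    obtain ⟨y, hy⟩ := hKim a.toRingHom
    have h2 := congrArg (fun g : K →ₐ[ℚ] ℂ => (g y).im) h
    simp only [ha' y] at h2
    rw [Complex.conj_im] at h2
    have h3 : (a y).im = 0 := by linarith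
    exact hy h3
  have huniv : ({a', a} : Finset (K →ₐ[ℚ] ℂ)) = Finset.univ :=
    Finset.eq_univ_of_card _ (by rw [Finset.card_pair hne, hcard])
  -- trace and norm via embeddings
  have htr : ∀ γ : K, algebraMap ℚ ℂ (Algebra.trace ℚ K γ) =
      (starRingEnd ℂ) (a γ) + a γ := by
    intro γ
    rw [trace_eq_sum_embeddings (E := ℂ), ← huniv, Finset.sum_pair hne, ha']
  have hnm : ∀ γ : K, algebraMap ℚ ℂ (Algebra.norm ℚ γ) =
      (starRingEnd ℂ) (a γ) * a γ := by
    intro γ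
    rw [Algebra.norm_eq_prod_embeddings, ← huniv, Finset.prod_pair hne, ha']
  set r : ℂ := a β with hr
  have htC : ((t : ℤ) : ℂ) = (starRingEnd ℂ) r + r := by
    have h := htr β
    rw [← ht, eq_intCast, eq_ratCast, Rat.cast_intCast] at h
    exact h
  have hnC : ((n : ℤ) : ℂ) = (starRingEnd ℂ) r * r := by
    have h := hnm β
    rw [← hn, eq_intCast, eq_ratCast, Rat.cast_intCast] at h
    exact h
  -- real consequences: t = 2 re r, n = |r|²
  have htre : (t : ℝ) = 2 * r.re := by
    have h := congrArg Complex.re htC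
    simp only [Complex.add_re, Complex.conj_re, Complex.intCast_re] at h
    rw [h]; ring
  have hnre : (n : ℝ) = r.re ^ 2 + r.im ^ 2 := by
    have h := congrArg Complex.re hnC
    simp only [Complex.mul_re, Complex.conj_re, Complex.conj_im, Complex.intCast_re] at h
    rw [h]; ring
  have hn0 : 0 ≤ n := by
    have : (0 : ℝ) ≤ (n : ℝ) := by rw [hnre]; positivity
    exact_mod_cast this
  have htn : t ^ 2 ≤ 4 * n := by
    have : (t : ℝ) ^ 2 ≤ 4 * (n : ℝ) := by rw [htre, hnre]; nlinarith [sq_nonneg r.im]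
    exact_mod_cast this
  -- trace of β²
  have htr2 : Algebra.trace ℚ K (β ^ 2) = ((t ^ 2 - 2 * n : ℤ) : ℚ) := by
    have hinj := (algebraMap ℚ ℂ).injective
    apply hinj
    rw [htr (β ^ 2), eq_ratCast, Rat.cast_intCast]
    have h1 : a (β ^ 2) = r ^ 2 := by rw [map_pow]
    have h2 : (starRingEnd ℂ) (r ^ 2) = ((starRingEnd ℂ) r) ^ 2 := by rw [map_pow]
    rw [h1, h2]
    push_cast
    rw [htC, hnC]
    ring
  -- the discriminant of the basis (1, β)
  set ι := Module.Free.ChooseBasisIndex ℤ (𝓞 K) with hι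
  have hcardι : Fintype.card ι = 2 := by
    rw [← Module.finrank_eq_card_chooseBasisIndex, RingOfIntegers.rank, hK2]
  let e : Fin 2 ≃ ι := Fintype.equivOfCardEq (by simp [hcardι])
  let b' : Module.Basis (Fin 2) ℚ K := (integralBasis K).reindex e.symm
  let β₀ : 𝓞 K := ⟨β, hβ⟩
  let z : Fin 2 → 𝓞 K := ![1, β₀]
  let v : Fin 2 → K := ![1, β]
  have hv : ∀ j, v j = algebraMap (𝓞 K) K (z j) := by
    intro j; fin_cases j <;> simp [v, z, β₀] <;> rfl
  let Pz : Matrix (Fin 2) (Fin 2) ℤ := Matrix.of fun i j =>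
    (RingOfIntegers.basis K).repr (z j) (e i)
  have hrepr : ∀ i j, b'.repr (v j) i = algebraMap ℤ ℚ (Pz i j) := by
    intro i j
    rw [hv j]
    show ((integralBasis K).reindex e.symm).repr _ i = _
    rw [Module.Basis.repr_reindex_apply, Equiv.symm_symm, integralBasis_repr_apply]
    rfl
  have hvec : v = Matrix.vecMul (⇑b') ((Pz.map (algebraMap ℤ ℚ)).map (algebraMap ℚ K)) := by
    funext j
    have hs := (Module.Basis.sum_repr b' (v j)).symm
    rw [hs]
    show _ = ∑ i, b' i * ((Pz.map (algebraMap ℤ ℚ)).map (algebraMap ℚ K)) i j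
    refine Finset.sum_congr rfl fun i _ => ?_
    rw [hrepr i j, Algebra.smul_def, mul_comm]
    simp [Matrix.map_apply]
  have hdiscr1 : Algebra.discr ℚ v = ((Pz.det : ℚ)) ^ 2 * (NumberField.discr K : ℚ) := by
    rw [hvec, Algebra.discr_of_matrix_vecMul]
    congr 1
    · rw [show (Pz.map ⇑(algebraMap ℤ ℚ)).det = ((algebraMap ℤ ℚ).mapMatrix Pz).det from rfl,
        ← RingHom.map_det, eq_intCast]
    · have : ⇑b' = ⇑(integralBasis K) ∘ ⇑e := by
        funext i; simp [b', Module.Basis.coe_reindex]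
      rw [this]
      have h4 : ⇑(integralBasis K) ∘ ⇑e = ⇑(integralBasis K) ∘ ⇑(e.symm).symm := by
        simp
      rw [h4, Algebra.discr_reindex, ← NumberField.coe_discr]
  have hdiscr2 : Algebra.discr ℚ v = (t : ℚ) ^ 2 - 4 * (n : ℚ) := by
    rw [Algebra.discr_def, Matrix.det_fin_two]
    simp only [Algebra.traceMatrix_apply, Algebra.traceForm_apply]
    have h00 : v 0 * v 0 = 1 := by simp [v]
    have h01 : v 0 * v 1 = β := by simp [v]
    have h10 : v 1 * v 0 = β := by simp [v]
    have h11 : v 1 * v 1 = β ^ 2 := by rw [show v 1 = β from rfl]; ring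
    rw [h00, h01, h10, h11, htr2]
    have htr1 : Algebra.trace ℚ K 1 = (2 : ℚ) := by
      have h5 : (1 : K) = algebraMap ℚ K 1 := by simp
      rw [h5, Algebra.trace_algebraMap, hK2]; norm_num
    have htrβ : Algebra.trace ℚ K β = ((t : ℤ) : ℚ) := by rw [← ht, eq_intCast]
    rw [htr1, htrβ]; push_cast; ring
  refine ⟨t, n, Pz.det, hn, hn0, htn, ?_⟩
  have hfin : ((t : ℚ)) ^ 2 - 4 * ((n : ℚ)) = ((Pz.det : ℚ)) ^ 2 * ((NumberField.discr K : ℤ) : ℚ) := by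
    rw [← hdiscr2, hdiscr1]
  exact_mod_cast hfin

end helpers

set_option maxHeartbeats 2000000 in
theorem stmt18
    (F K : Type*) [Field F] [NumberField F] [Field K] [NumberField K]
    [Algebra K F] [IsScalarTower ℚ K F]
    (hquartic : Module.finrank ℚ F = 4)
    (hquad : Module.finrank K F = 2)
    (hKim : ∀ φ : K →+* ℂ, ∃ x, (φ x).im ≠ 0)
    (σ σ' : F →+* ℂ)
    (hplaces : InfinitePlace.mk σ ≠ InfinitePlace.mk σ')
 :
    ((∃ x : 𝓞 F, absN σ σ' (x : F) = 2 ∨ absN σ σ' (x : F) = 3) →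
      |NumberField.discr K| ≤ 12) ∧
    ((NumberField.discr K = -3 ∨ NumberField.discr K = -11) →
      (∀ x : 𝓞 F, absN σ σ' (x : F) ≠ 2) ∧ ∀ s : ℝ, 0 < s → frakB σ σ' 2 s = ∅) ∧
    ((NumberField.discr K = -4 ∨ NumberField.discr K = -7) →
      (∀ x : 𝓞 F, absN σ σ' (x : F) ≠ 3) ∧ ∀ s : ℝ, 0 < s → frakB σ σ' 3 s = ∅) := by
  classical
  have hKF : FiniteDimensional K F := FiniteDimensional.right ℚ K F
  have hK2 : Module.finrank ℚ K = 2 := by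
    have h := Module.finrank_mul_finrank ℚ K F
    rw [hquad, hquartic] at h; omega
  -- key step: from an element of norm m, get the quadratic data
  have key : ∀ (x : 𝓞 F) (m : ℤ), 0 < m → absN σ σ' (x : F) = (m : ℝ) →
      ∃ t f : ℤ, t ^ 2 ≤ 4 * m ∧ t ^ 2 - 4 * m = f ^ 2 * NumberField.discr K := by
    intro x m hm0 hx
    have habs := absN_eq_abs_norm (K := K) hquartic hKim σ σ' hplaces (x : F)
    rw [hx] at habs
    have habsQ : |Algebra.norm ℚ (x : F)| = (m : ℚ) := by exact_mod_cast habs.symm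
    set β : K := Algebra.norm K (x : F) with hβdef
    have hβnorm : Algebra.norm ℚ β = Algebra.norm ℚ (x : F) := by
      rw [hβdef, Algebra.norm_norm]
    have hβint : IsIntegral ℤ β := Algebra.isIntegral_norm K x.isIntegral_coe
    obtain ⟨t, n, f, hn, hn0, htn, heq⟩ := quadratic_data hK2 hKim hβint
    have hnm : n = m := by
      have h2 : |(n : ℚ)| = (m : ℚ) := by
        rw [← eq_intCast (algebraMap ℤ ℚ) n, hn, hβnorm]; exact habsQ
      have h3 : |n| = m := by exact_mod_cast h2
      rwa [abs_of_nonneg hn0] at h3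
    exact ⟨t, f, by rw [← hnm]; exact htn, by rw [← hnm]; exact heq⟩
  have key2 : ∀ (x : 𝓞 F) (m : ℤ), (m = 2 ∨ m = 3) → absN σ σ' (x : F) = (m : ℝ) →
      ∃ t f : ℤ, t ^ 2 < 4 * m ∧ t ^ 2 - 4 * m = f ^ 2 * NumberField.discr K := by
    intro x m hm hx
    obtain ⟨t, f, h1, h2⟩ := key x m (by omega) hx
    refine ⟨t, f, lt_of_le_of_ne h1 ?_, h2⟩
    intro h
    rcases hm with rfl | rfl
    · have ht1 : t ≤ 3 := by nlinarith [sq_nonneg (t - 4)]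
      have ht2 : -3 ≤ t := by nlinarith [sq_nonneg (t + 4)]
      interval_cases t <;> norm_num at h
    · have ht1 : t ≤ 3 := by nlinarith [sq_nonneg (t - 4)]
      have ht2 : -3 ≤ t := by nlinarith [sq_nonneg (t + 4)]
      interval_cases t <;> norm_num at h
  refine ⟨?_, ?_, ?_⟩
  · rintro ⟨x, hx | hx⟩
    · obtain ⟨t, f, h1, h2⟩ := key2 x 2 (Or.inl rfl) (by rw [hx]; norm_num)
      have hf : 1 ≤ f ^ 2 := by
        rcases eq_or_ne f 0 with h | h
        · exfalso; rw [h] at h2; simp at h2; nlinarith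
        · have : 0 < f ^ 2 := by positivity
          omega
      have hd : NumberField.discr K < 0 := by nlinarith
      rw [abs_of_neg hd]; nlinarith
    · obtain ⟨t, f, h1, h2⟩ := key2 x 3 (Or.inr rfl) (by rw [hx]; norm_num)
      have hf : 1 ≤ f ^ 2 := by
        rcases eq_or_ne f 0 with h | h
        · exfalso; rw [h] at h2; simp at h2; nlinarith
        · have : 0 < f ^ 2 := by positivity
          omega
      have hd : NumberField.discr K < 0 := by nlinarith
      rw [abs_of_neg hd]; nlinarith
  · intro hd
    have h1 : ∀ x : 𝓞 F, absN σ σ' (x : F) ≠ 2 := by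
      intro x hx
      obtain ⟨t, f, hlt, heq⟩ := key2 x 2 (Or.inl rfl) (by rw [hx]; norm_num)
      rcases hd with h | h <;> rw [h] at heq
      · have hf1 : -2 ≤ f := by nlinarith [sq_nonneg t, sq_nonneg (f + 2)]
        have hf2 : f ≤ 2 := by nlinarith [sq_nonneg t, sq_nonneg (f - 2)]
        have ht1 : -3 ≤ t := by nlinarith [sq_nonneg f, sq_nonneg (t + 3)]
        have ht2 : t ≤ 3 := by nlinarith [sq_nonneg f, sq_nonneg (t - 3)]
        interval_cases t <;> interval_cases f <;> norm_num at heq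
      · have hf1 : -1 ≤ f := by nlinarith [sq_nonneg t, sq_nonneg (f + 1)]
        have hf2 : f ≤ 1 := by nlinarith [sq_nonneg t, sq_nonneg (f - 1)]
        have ht1 : -3 ≤ t := by nlinarith [sq_nonneg f, sq_nonneg (t + 3)]
        have ht2 : t ≤ 3 := by nlinarith [sq_nonneg f, sq_nonneg (t - 3)]
        interval_cases t <;> interval_cases f <;> norm_num at heq
    exact ⟨h1, fun s hs => Set.eq_empty_iff_forall_notMem.mpr fun x hx =>
      h1 x (by have := hx.1; norm_num at this ⊢; exact this)⟩
  · intro hd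
    have h1 : ∀ x : 𝓞 F, absN σ σ' (x : F) ≠ 3 := by
      intro x hx
      obtain ⟨t, f, hlt, heq⟩ := key2 x 3 (Or.inr rfl) (by rw [hx]; norm_num)
      rcases hd with h | h <;> rw [h] at heq
      · have hf1 : -2 ≤ f := by nlinarith [sq_nonneg t, sq_nonneg (f + 2)]
        have hf2 : f ≤ 2 := by nlinarith [sq_nonneg t, sq_nonneg (f - 2)]
        have ht1 : -4 ≤ t := by nlinarith [sq_nonneg f, sq_nonneg (t + 4)]
        have ht2 : t ≤ 4 := by nlinarith [sq_nonneg f, sq_nonneg (t - 4)]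
        interval_cases t <;> interval_cases f <;> norm_num at heq
      · have hf1 : -2 ≤ f := by nlinarith [sq_nonneg t, sq_nonneg (f + 2)]
        have hf2 : f ≤ 2 := by nlinarith [sq_nonneg t, sq_nonneg (f - 2)]
        have ht1 : -4 ≤ t := by nlinarith [sq_nonneg f, sq_nonneg (t + 4)]
        have ht2 : t ≤ 4 := by nlinarith [sq_nonneg f, sq_nonneg (t - 4)]
        interval_cases t <;> interval_cases f <;> norm_num at heq
    exact ⟨h1, fun s hs => Set.eq_empty_iff_forall_notMem.mpr fun x hx =>
      h1 x (by have := hx.1; norm_num at this ⊢; exact this)⟩
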